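/- Let r₀ > 0, let k ≥ 1 be an integer, let α ∈ ℂ, and let c_r, c_φ ∈ ℂ be constants satisfying c_φ = i·c_r if k = 1 and c_r = c_φ = 0 if k ≠ 1. Let w_k, ρ_k : (r₀,∞) → ℂ be continuous functions such that s ↦ s^{-k+1}·(|w_k(s)| + |ρ_k(s)|) is integrable on (r₀,∞). Define for r > r₀: v_{r,k}(r) = (i/2)·r^{-k-1}·∫_{r₀}^r s^{k+1}(w_k(s) − i·ρ_k(s)) ds + (i/2)·r^{k-1}·∫_r^∞ s^{-k+1}(w_k(s) + i·ρ_k(s)) ds + α·i·r^{-k-1} + c_r, and v_{φ,k}(r) = (1/2)·r^{-k-1}·∫_{r₀}^r s^{k+1}(w_k(s) − i·ρ_k(s)) ds − (1/2)·r^{k-1}·∫_r^∞ s^{-k+1}(w_k(s) + i·ρ_k(s)) ds + α·r^{-k-1} + c_φ. Then v_{r,k} and v_{φ,k} are differentiable on (r₀,∞) and satisfy, for every r > r₀, the equations (1/r)·d/dr(r·v_{r,k}(r)) + (ik/r)·v_{φ,k}(r) = ρ_k(r) and (1/r)·d/dr(r·v_{φ,k}(r)) − (ik/r)·v_{r,k}(r)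 = w_k(r). -/
import Mathlib


open Real MeasureTheory intervalIntegral

private lemma deriv_ofReal_mul' {f : ℝ → ℂ} {f' : ℂ} {r : ℝ} (hf : HasDerivAt f f' r) :
    deriv (fun t : ℝ => (t : ℂ) * f t) r = f r + (r : ℂ) * f' := by
  have hre : HasDerivAt (fun t : ℝ => ((t : ℝ) : ℂ)) 1 r := by
    simpa using (hasDerivAt_id r).ofReal_comp
  have hmul : HasDerivAt (fun t : ℝ => (t : ℂ) * f t) (1 * f r + (r : ℂ) * f') r := hre.mul hf
  rw [hmul.deriv, one_mul]

set_option maxHeartbeats 1000000 in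
/-- the explicit Fourier-mode formulas solve the div-curl ODE
system in the exterior of the disk of radius `r₀`. -/
theorem divcurl_fourier_mode_solution (r₀ : ℝ) (hr₀ : 0 < r₀) (k : ℤ) (hk : 1 ≤ k)
    (α cr cφ : ℂ)
    (hc1 : k = 1 → cφ = Complex.I * cr)
    (hc2 : k ≠ 1 → cr = 0 ∧ cφ = 0)
    (w ρ : ℝ → ℂ)
    (hw : ContinuousOn w (Set.Ioi r₀)) (hρ : ContinuousOn ρ (Set.Ioi r₀))
    (hint : IntegrableOn (fun s : ℝ => s ^ (-k + 1) * (‖w s‖ + ‖ρ s‖)) (Set.Ioi r₀))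
    (vr vφ : ℝ → ℂ)
    (hvr : ∀ r : ℝ, vr r =
      (Complex.I / 2) * ((r ^ (-k - 1) : ℝ) : ℂ) *
          (∫ s in r₀..r, ((s ^ (k + 1) : ℝ) : ℂ) * (w s - Complex.I * ρ s))
        + (Complex.I / 2) * ((r ^ (k - 1) : ℝ) : ℂ) *
          (∫ s in Set.Ioi r, ((s ^ (-k + 1) : ℝ) : ℂ) * (w s + Complex.I * ρ s))
        + α * Complex.I * ((r ^ (-k - 1) : ℝ) : ℂ) + cr)
    (hvφ : ∀ r : ℝ, vφ r =
      (1 / 2 : ℂ) * ((r ^ (-k - 1) : ℝ) : ℂ) *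
          (∫ s in r₀..r, ((s ^ (k + 1) : ℝ) : ℂ) * (w s - Complex.I * ρ s))
        - (1 / 2 : ℂ) * ((r ^ (k - 1) : ℝ) : ℂ) *
          (∫ s in Set.Ioi r, ((s ^ (-k + 1) : ℝ) : ℂ) * (w s + Complex.I * ρ s))
        + α * ((r ^ (-k - 1) : ℝ) : ℂ) + cφ) :
    ∀ r ∈ Set.Ioi r₀,
      DifferentiableAt ℝ vr r ∧ DifferentiableAt ℝ vφ r ∧
      (1 / (r : ℂ)) * deriv (fun t : ℝ => (t : ℂ) * vr t) r
          + (Complex.I * (k : ℂ) / (r : ℂ)) * vφ r = ρ r ∧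
      (1 / (r : ℂ)) * deriv (fun t : ℝ => (t : ℂ) * vφ t) r
          - (Complex.I * (k : ℂ) / (r : ℂ)) * vr r = w r := by
  intro r hr
  have hr' : r₀ < r := hr
  have hr0 : (0:ℝ) < r := hr₀.trans hr'
  have hrne : r ≠ 0 := ne_of_gt hr0
  -- the two integrands
  set f₁ : ℝ → ℂ := fun s => ((s ^ (k + 1) : ℝ) : ℂ) * (w s - Complex.I * ρ s) with hf₁def
  set f₂ : ℝ → ℂ := fun s => ((s ^ (-k + 1) : ℝ) : ℂ) * (w s + Complex.I * ρ s) with hf₂def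
  -- continuity of the integrands
  have hzc : ∀ n : ℤ, ContinuousOn (fun s : ℝ => ((s ^ n : ℝ) : ℂ)) (Set.Ioi r₀) := by
    intro n
    exact Complex.continuous_ofReal.comp_continuousOn
      ((continuousOn_zpow₀ n).mono (fun s hs => by
        simpa using (ne_of_gt (hr₀.trans hs))))
  have hcont1 : ContinuousOn f₁ (Set.Ioi r₀) :=
    (hzc (k+1)).mul (hw.sub (continuousOn_const.mul hρ))
  have hcont2 : ContinuousOn f₂ (Set.Ioi r₀) :=
    (hzc (-k+1)).mul (hw.add (continuousOn_const.mul hρ))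
  -- integrability of f₂ on (r₀, ∞)
  have hbd2 : ∀ s ∈ Set.Ioi r₀, ‖f₂ s‖ ≤ s ^ (-k+1) * (‖w s‖ + ‖ρ s‖) := by
    intro s hs
    have hs0 : (0:ℝ) < s := hr₀.trans hs
    have h1 : ‖f₂ s‖ = s ^ (-k+1) * ‖w s + Complex.I * ρ s‖ := by
      rw [hf₂def]; simp [Real.norm_eq_abs, abs_of_pos hs0]
    rw [h1]
    refine mul_le_mul_of_nonneg_left ?_ (le_of_lt (zpow_pos hs0 _))
    calc ‖w s + Complex.I * ρ s‖ ≤ ‖w s‖ + ‖Complex.I * ρ s‖ := norm_add_le _ _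
      _ = ‖w s‖ + ‖ρ s‖ := by rw [norm_mul, Complex.norm_I, one_mul]
  have hint2 : IntegrableOn f₂ (Set.Ioi r₀) := by
    refine Integrable.mono' hint (hcont2.aestronglyMeasurable measurableSet_Ioi) ?_
    exact (ae_restrict_iff' measurableSet_Ioi).2 (Filter.Eventually.of_forall hbd2)
  have hII2 : ∀ a b : ℝ, a ∈ Set.Ioi r₀ → b ∈ Set.Ioi r₀ → IntervalIntegrable f₂ volume a b := by
    intro a b ha hb
    rw [intervalIntegrable_iff]
    refine hint2.mono_set (fun x hx => ?_)
    exact lt_of_lt_of_le (lt_min ha hb) (le_of_lt hx.1)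
  -- integrability of f₁ on (r₀, r]
  have hII1 : IntervalIntegrable f₁ volume r₀ r := by
    rw [intervalIntegrable_iff_integrableOn_Ioc_of_le hr'.le]
    refine Integrable.mono'
      ((hint.mono_set Set.Ioc_subset_Ioi_self).const_mul (r ^ (2*k)))
      ((hcont1.mono Set.Ioc_subset_Ioi_self).aestronglyMeasurable measurableSet_Ioc) ?_
    refine (ae_restrict_iff' measurableSet_Ioc).2 (Filter.Eventually.of_forall ?_)
    intro s hs
    have hs0 : (0:ℝ) < s := hr₀.trans hs.1
    have hsr : s ≤ r := hs.2
    have h1 : ‖f₁ s‖ = s ^ (k+1) * ‖w s - Complex.I * ρ s‖ := by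
      rw [hf₁def]; simp [Real.norm_eq_abs, abs_of_pos hs0]
    have h2 : ‖w s - Complex.I * ρ s‖ ≤ ‖w s‖ + ‖ρ s‖ := by
      calc ‖w s - Complex.I * ρ s‖ ≤ ‖w s‖ + ‖Complex.I * ρ s‖ := norm_sub_le _ _
        _ = ‖w s‖ + ‖ρ s‖ := by rw [norm_mul, Complex.norm_I, one_mul]
    have hsplit : s ^ (k+1) = s ^ (2*k) * s ^ (-k+1) := by
      rw [← zpow_add₀ hs0.ne']; ring_nf
    have hmono : s ^ (2*k) ≤ r ^ (2*k) := by
      have h2k : (0:ℤ) ≤ 2*k := by linarith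
      rw [show (2*k) = ((2*k).toNat : ℤ) from (Int.toNat_of_nonneg h2k).symm,
        zpow_natCast, zpow_natCast]
      exact pow_le_pow_left₀ hs0.le hsr _
    have hnn : (0:ℝ) ≤ ‖w s‖ + ‖ρ s‖ := by positivity
    rw [h1, hsplit]
    calc s ^ (2*k) * s ^ (-k+1) * ‖w s - Complex.I * ρ s‖
        ≤ s ^ (2*k) * s ^ (-k+1) * (‖w s‖ + ‖ρ s‖) := by
          refine mul_le_mul_of_nonneg_left h2 ?_
          positivity
      _ ≤ r ^ (2*k) * (s ^ (-k+1) * (‖w s‖ + ‖ρ s‖)) := by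
          rw [mul_assoc]
          refine mul_le_mul_of_nonneg_right hmono ?_
          positivity
  -- FTC for the first integral
  have hA : HasDerivAt (fun x : ℝ => ∫ s in r₀..x, f₁ s) (f₁ r) r :=
    intervalIntegral.integral_hasDerivAt_right hII1
      (hcont1.stronglyMeasurableAtFilter isOpen_Ioi r hr)
      (hcont1.continuousAt (Ioi_mem_nhds hr'))
  -- derivative of the tail integral
  have hBrep : ∀ x ∈ Set.Ioi r₀,
      (∫ s in Set.Ioi x, f₂ s) = (∫ s in Set.Ioi r, f₂ s) - ∫ t in r..x, f₂ t := by
    have key : ∀ a b : ℝ, a ∈ Set.Ioi r₀ → b ∈ Set.Ioi r₀ → a ≤ b →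
        (∫ s in Set.Ioi a, f₂ s) = (∫ t in a..b, f₂ t) + ∫ s in Set.Ioi b, f₂ s := by
      intro a b ha hb hab
      rw [intervalIntegral.integral_of_le hab, ← Set.Ioc_union_Ioi_eq_Ioi hab,
        MeasureTheory.setIntegral_union Set.Ioc_disjoint_Ioi_same measurableSet_Ioi
          (hint2.mono_set (fun x hx => lt_trans ha hx.1))
          (hint2.mono_set (Set.Ioi_subset_Ioi hb.le))]
    intro x hx
    rcases le_total r x with h | h
    · rw [key r x hr hx h]; ring
    · rw [key x r hx hr h, intervalIntegral.integral_symm x r]; ring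
  have hB : HasDerivAt (fun x : ℝ => ∫ s in Set.Ioi x, f₂ s) (-(f₂ r)) r := by
    have hD0 := intervalIntegral.integral_hasDerivAt_right (hII2 r r hr hr)
      (hcont2.stronglyMeasurableAtFilter isOpen_Ioi r hr)
      (hcont2.continuousAt (Ioi_mem_nhds hr'))
    have hD : HasDerivAt (fun x : ℝ => (∫ s in Set.Ioi r, f₂ s) - ∫ t in r..x, f₂ t)
        (-(f₂ r)) r := (hD0.const_sub _)
    refine hD.congr_of_eventuallyEq ?_
    exact Filter.eventuallyEq_of_mem (Ioi_mem_nhds hr') hBrep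
  -- derivatives of real powers
  have hz : ∀ n : ℤ, HasDerivAt (fun t : ℝ => ((t ^ n : ℝ) : ℂ)) ((n : ℂ) * (r : ℂ) ^ (n - 1)) r := by
    intro n
    have h2 := (hasDerivAt_zpow n r (Or.inl hrne)).ofReal_comp
    simpa [Complex.ofReal_mul, Complex.ofReal_zpow] using h2
  -- derivative of vr
  have hFr := ((((hz (-k-1)).mul hA).const_mul (Complex.I/2)).add
      (((hz (k-1)).mul hB).const_mul (Complex.I/2))).add
      (((hz (-k-1)).const_mul (α*Complex.I)).add (hasDerivAt_const r cr))
  have hevr : vr =ᶠ[nhds r] (fun t : ℝ =>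
      (Complex.I/2 * (((t ^ (-k-1) : ℝ) : ℂ) * ∫ s in r₀..t, f₁ s)
        + Complex.I/2 * (((t ^ (k-1) : ℝ) : ℂ) * ∫ s in Set.Ioi t, f₂ s))
      + (α * Complex.I * ((t ^ (-k-1) : ℝ) : ℂ) + cr)) := by
    refine Filter.Eventually.of_forall (fun t => ?_)
    rw [hvr t]; ring
  have hvrD := hFr.congr_of_eventuallyEq hevr
  -- derivative of vφ
  have hFφ := ((((hz (-k-1)).mul hA).const_mul ((1:ℂ)/2)).sub
      (((hz (k-1)).mul hB).const_mul ((1:ℂ)/2))).add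
      (((hz (-k-1)).const_mul α).add (hasDerivAt_const r cφ))
  have hevφ : vφ =ᶠ[nhds r] (fun t : ℝ =>
      ((1:ℂ)/2 * (((t ^ (-k-1) : ℝ) : ℂ) * ∫ s in r₀..t, f₁ s)
        - (1:ℂ)/2 * (((t ^ (k-1) : ℝ) : ℂ) * ∫ s in Set.Ioi t, f₂ s))
      + (α * ((t ^ (-k-1) : ℝ) : ℂ) + cφ)) := by
    refine Filter.Eventually.of_forall (fun t => ?_)
    rw [hvφ t]; ring
  have hvφD := hFφ.congr_of_eventuallyEq hevφ
  -- the constants relations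
  have hcr' : cr = -(Complex.I * (k:ℂ) * cφ) := by
    by_cases h1 : k = 1
    · subst h1
      rw [hc1 rfl]
      push_cast
      linear_combination cr * Complex.I_sq
    · rw [(hc2 h1).1, (hc2 h1).2]; ring
  have hcφ' : cφ = Complex.I * (k:ℂ) * cr := by
    by_cases h1 : k = 1
    · subst h1
      rw [hc1 rfl]
      push_cast
      ring
    · rw [(hc2 h1).1, (hc2 h1).2]; ring
  -- power rewrites
  set ζ : ℂ := (r : ℂ) with hζdef
  have hζ : ζ ≠ 0 := Complex.ofReal_ne_zero.2 hrne
  set u : ℂ := ζ ^ k with hudef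
  have hu : u ≠ 0 := zpow_ne_zero _ hζ
  set x : ℂ := ζ⁻¹ with hxdef
  set y : ℂ := u⁻¹ with hydef
  have hx : ζ * x = 1 := by rw [hxdef]; exact mul_inv_cancel₀ hζ
  have hy : u * y = 1 := by rw [hydef]; exact mul_inv_cancel₀ hu
  have e1 : ζ ^ (k+1) = u * ζ := by rw [hudef, zpow_add₀ hζ, zpow_one]
  have e2 : ζ ^ (k-1) = u * x := by
    rw [hxdef, hudef, zpow_sub₀ hζ, zpow_one, div_eq_mul_inv]
  have e3 : ζ ^ (-k-1) = x * y := by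
    rw [hxdef, hydef, hudef, show -k-1 = -(k+1) by ring, zpow_neg, zpow_add₀ hζ, zpow_one,
      mul_inv_rev]
  have e4 : ζ ^ (-k+1) = y * ζ := by
    rw [hydef, hudef, zpow_add₀ hζ, zpow_neg, zpow_one]
  have e5 : ζ ^ (k-1-1) = u * x * x := by
    rw [zpow_sub₀ hζ, zpow_one, e2, div_eq_mul_inv, hxdef]
  have e6 : ζ ^ (-k-1-1) = x * y * x := by
    rw [zpow_sub₀ hζ, zpow_one, e3, div_eq_mul_inv, hxdef]
  have hf1r : f₁ r = u * ζ * (w r - Complex.I * ρ r) := by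
    simp only [hf₁def]
    rw [Complex.ofReal_zpow, ← hζdef, e1]
  have hf2r : f₂ r = y * ζ * (w r + Complex.I * ρ r) := by
    simp only [hf₂def]
    rw [Complex.ofReal_zpow, ← hζdef, e4]
  refine ⟨hvrD.differentiableAt, hvφD.differentiableAt, ?_, ?_⟩
  · rw [deriv_ofReal_mul' hvrD, hvr r, hvφ r, hcr', hf1r, hf2r]
    simp only [Complex.ofReal_zpow, ← hζdef]
    push_cast
    simp only [e2, e3, e4, e5, e6]
    simp only [one_div, div_eq_mul_inv, ← hxdef]
    linear_combination ((-1 : ℂ) * Complex.I * x^2 * y * α + (-1 : ℂ) * Complex.I * x^2 * y * α * (k : ℂ) + (-1/2 : ℂ) * Complex.I * x^2 * y * (∫ (s : ℝ) in r₀..r, f₁ s) + (-1/2 : ℂ) * Complex.I * x^2 * y * (∫ (s : ℝ) in r₀..r, f₁ s) * (k : ℂ) + (-1/2 : ℂ) * Complex.I * u * x^2 * (∫ (s : ℝ) in Set.Ioi r, f₂ s) + (1/2 : ℂ) * Complex.I * u * x^2 * (∫ (s : ℝ) in Set.Ioi r, f₂ s) * (k : ℂ) + (-1 : ℂ) * Complex.I^2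 * u * y * (ρ r) + (-1 : ℂ) * Complex.I^2 * u * ζ * x * y * (ρ r)) * hx + ((-1 : ℂ) * Complex.I^2 * (ρ r)) * hy + ((-1 : ℂ) * (ρ r)) * Complex.I_mul_I
  · rw [deriv_ofReal_mul' hvφD, hvr r, hvφ r, hcφ', hf1r, hf2r]
    simp only [Complex.ofReal_zpow, ← hζdef]
    push_cast
    simp only [e2, e3, e4, e5, e6]
    simp only [one_div, div_eq_mul_inv, ← hxdef]
    linear_combination ((-1 : ℂ) * x^2 * y * α + (-1 : ℂ) * x^2 * y * α * (k : ℂ) + (-1/2 : ℂ) * x^2 * y * (∫ (s : ℝ) in r₀..r, f₁ s) + (-1/2 : ℂ) * x^2 * y * (∫ (s : ℝ) in r₀..r, f₁ s) * (k : ℂ) + (1 : ℂ) * u * y * (w r) + (1/2 : ℂ) * u * x^2 * (∫ (s : ℝ) in Set.Ioi r, f₂ s) + (-1/2 : ℂ) * u * x^2 * (∫ (s : ℝ) in Set.Ioi r, f₂ s) * (k : ℂ) + (1 : ℂ) * u * ζ * x * y * (w r)) * hx + ((1 : ℂ) * (w r)) * hy + ((-1 : ℂ) * x^2 * y * α * (k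 : ℂ) + (-1/2 : ℂ) * x^2 * y * (∫ (s : ℝ) in r₀..r, f₁ s) * (k : ℂ) + (-1/2 : ℂ) * u * x^2 * (∫ (s : ℝ) in Set.Ioi r, f₂ s) * (k : ℂ)) * Complex.I_mul_I
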